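/- Let Q be a probability measure on a measurable space (Ω, 𝒜) and let P : Ω → [0,∞) be a p-variable with respect to Q, i.e., measurable with Q(P ≤ α) ≤ α for all α ∈ (0,1). Then for every κ ∈ (0,1], the function f_κ(P) := κ P^{κ−1} (with the convention f_κ(0) := ∞ for κ < 1, and values of P exceeding 1 truncated to 1) satisfies ∫ f_κ(P) dQ ≤ 1; that is, f_κ(p) = κ p^{κ−1} is a calibrator transforming p-values into e-values. -/

import Mathlib

open scoped ENNReal
open MeasureTheory

/-- The functions `f_κ(p) := κ p^{κ-1}`, `κ ∈ (0,1]`, are calibrators: applied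
to a p-variable `P` (with values exceeding 1 truncated to 1; note that in
`ℝ≥0∞` one has `0 ^ (κ-1) = ∞` for `κ < 1`, matching the convention
`f_κ(0) := ∞`), they produce an e-variable. -/
theorem calibrator_kappa
    {Ω : Type*} [MeasurableSpace Ω] (Q : Measure Ω) [IsProbabilityMeasure Q]
    (P : Ω → ℝ) (hmeas : Measurable P) (hP0 : ∀ ω, 0 ≤ P ω)
    (hP : ∀ α : ℝ, 0 < α → α < 1 → Q {ω | P ω ≤ α} ≤ ENNReal.ofReal α)
    (κ : ℝ) (hκ : κ ∈ Set.Ioc (0 : ℝ) 1) :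
    ∫⁻ ω, ENNReal.ofReal κ * ENNReal.ofReal (min (P ω) 1) ^ (κ - 1) ∂Q ≤ 1 := by
  obtain ⟨hκ0, hκ1⟩ := hκ
  rcases eq_or_lt_of_le hκ1 with hκeq | hκlt
  · subst hκeq
    simp [sub_self, ENNReal.rpow_zero, lintegral_const, measure_univ]
  -- κ < 1 case
  set c : ℝ := κ - 1 with hc
  have hc0 : c < 0 := by simp [hc]; linarith
  have hcm1 : -1 < c := by simp [hc]; linarith
  -- {P ≤ 0} is a null set
  have hnull : Q {ω | P ω ≤ 0} = 0 := by
    refine le_antisymm ?_ zero_le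
    refine ENNReal.le_of_forall_pos_le_add (fun ε hε _ => ?_)
    rw [zero_add]
    set α : ℝ := min (ε : ℝ) 1 / 2 with hα
    have hα0 : 0 < α := by positivity
    have hα1 : α < 1 := by
      have : min (ε : ℝ) 1 ≤ 1 := min_le_right _ _
      simp [hα]; linarith
    have h1 : Q {ω | P ω ≤ 0} ≤ Q {ω | P ω ≤ α} :=
      measure_mono (fun ω hω => le_trans hω hα0.le)
    refine h1.trans ((hP α hα0 hα1).trans ?_)
    have : α ≤ (ε : ℝ) := by
      have : min (ε : ℝ) 1 ≤ (ε : ℝ) := min_le_left _ _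
      simp [hα]; linarith
    calc ENNReal.ofReal α ≤ ENNReal.ofReal (ε : ℝ) := ENNReal.ofReal_le_ofReal this
      _ = (ε : ℝ≥0∞) := ENNReal.ofReal_coe_nnreal
  have hae : ∀ᵐ ω ∂Q, 0 < P ω := by
    rw [ae_iff]
    convert hnull using 2
    ext ω; simp [not_lt]
  -- rewrite integrand as ofReal of a real function
  set g : Ω → ℝ := fun ω => κ * (min (P ω) 1) ^ c with hg
  have hkey : ∫⁻ ω, ENNReal.ofReal κ * ENNReal.ofReal (min (P ω) 1) ^ c ∂Q
      = ∫⁻ ω, ENNReal.ofReal (g ω) ∂Q := by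
    refine lintegral_congr_ae ?_
    filter_upwards [hae] with ω hω
    have hm : 0 < min (P ω) 1 := lt_min hω one_pos
    rw [ENNReal.ofReal_rpow_of_pos hm, ← ENNReal.ofReal_mul hκ0.le]
  rw [hkey]
  have g_nn : 0 ≤ᵐ[Q] g := Filter.Eventually.of_forall fun ω =>
    mul_nonneg hκ0.le (Real.rpow_nonneg (le_min (hP0 ω) zero_le_one) c)
  have g_mble : AEMeasurable g Q := by
    exact (measurable_const.mul ((hmeas.min measurable_const).pow measurable_const)).aemeasurable
  rw [lintegral_eq_lintegral_meas_lt Q g_nn g_mble]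
  -- split the layer-cake integral at κ
  rw [← Set.Ioc_union_Ioi_eq_Ioi hκ0.le,
    lintegral_union measurableSet_Ioi (Set.Ioc_disjoint_Ioi le_rfl)]
  set a : ℝ := 1 / c with ha
  have ha1 : a < -1 := by
    rw [ha, div_lt_iff_of_neg hc0]; linarith
  have key2 : ∀ t ∈ Set.Ioi κ, Q {ω | t < g ω}
      ≤ ENNReal.ofReal (κ ^ (-a) * t ^ a) := by
    intro t ht
    simp only [Set.mem_Ioi] at ht
    have ht0 : 0 < t := hκ0.trans ht
    have htκ : 1 < t / κ := (one_lt_div hκ0).2 ht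
    set r : ℝ := (t / κ) ^ a with hr
    have hr0 : 0 < r := Real.rpow_pos_of_pos (by linarith) a
    have hr1 : r < 1 := Real.rpow_lt_one_of_one_lt_of_neg htκ (by linarith)
    have hsub : {ω | t < g ω} ⊆ {ω | P ω ≤ r} := by
      intro ω hω
      simp only [Set.mem_setOf_eq, hg] at hω ⊢
      set X : ℝ := min (P ω) 1 with hX
      have hX0 : 0 < X := by
        rcases lt_or_ge 0 X with h | h
        · exact h
        · exfalso
          have hX00 : X = 0 := le_antisymm h (le_min (hP0 ω) zero_le_one)
          rw [hX00, Real.zero_rpow hc0.ne, mul_zero] at hω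
          linarith
      have hdiv : t / κ < X ^ c := (div_lt_iff₀' hκ0).2 hω
      have : (X ^ c) ^ a < r := Real.rpow_lt_rpow_of_neg (by linarith) hdiv (by linarith)
      have hXr : X < r := by
        rwa [← Real.rpow_mul hX0.le, mul_one_div_cancel hc0.ne, Real.rpow_one] at this
      have : P ω < r := by
        rcases min_lt_iff.1 (hX ▸ hXr) with h | h
        · exact h
        · linarith
      exact this.le
    calc Q {ω | t < g ω} ≤ Q {ω | P ω ≤ r} := measure_mono hsub
      _ ≤ ENNReal.ofReal r := hP r hr0 hr1
      _ = ENNReal.ofReal (κ ^ (-a) * t ^ a) := by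
          rw [hr, Real.div_rpow ht0.le hκ0.le, Real.rpow_neg hκ0.le,
            mul_comm, div_eq_mul_inv]
  have hbound2 : ∫⁻ t in Set.Ioi κ, Q {ω | t < g ω}
      ≤ ENNReal.ofReal (1 - κ) := by
    have hint : IntegrableOn (fun t : ℝ => κ ^ (-a) * t ^ a) (Set.Ioi κ) :=
      (integrableOn_Ioi_rpow_of_lt ha1 hκ0).const_mul _
    have hnn : 0 ≤ᵐ[volume.restrict (Set.Ioi κ)] fun t : ℝ => κ ^ (-a) * t ^ a := by
      filter_upwards [ae_restrict_mem measurableSet_Ioi] with t ht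
      exact mul_nonneg (Real.rpow_nonneg hκ0.le _)
        (Real.rpow_nonneg (hκ0.trans ht).le _)
    calc ∫⁻ t in Set.Ioi κ, Q {ω | t < g ω}
        ≤ ∫⁻ t in Set.Ioi κ, ENNReal.ofReal (κ ^ (-a) * t ^ a) := by
          refine setLIntegral_mono ?_ key2
          exact ENNReal.measurable_ofReal.comp
            (measurable_const.mul (measurable_id.pow measurable_const))
      _ = ENNReal.ofReal (∫ t in Set.Ioi κ, κ ^ (-a) * t ^ a) :=
          (ofReal_integral_eq_lintegral_ofReal hint hnn).symm
      _ = ENNReal.ofReal (1 - κ) := by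
          congr 1
          rw [MeasureTheory.integral_const_mul, integral_Ioi_rpow_of_lt ha1 hκ0]
          have hκc : κ ^ (-a) * κ ^ (a + 1) = κ := by
            rw [← Real.rpow_add hκ0, show -a + (a + 1) = 1 by ring, Real.rpow_one]
          have ha0 : a + 1 = κ / c := by
            rw [ha]; field_simp [hc0.ne]; linarith
          calc κ ^ (-a) * (-κ ^ (a + 1) / (a + 1))
              = -(κ ^ (-a) * κ ^ (a + 1)) / (a + 1) := by ring
            _ = -κ / (κ / c) := by rw [hκc, ha0]
            _ = -c := by field_simp [hκ0.ne', hc0.ne]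
            _ = 1 - κ := by rw [hc]; ring
  have hbound1 : ∫⁻ t in Set.Ioc 0 κ, Q {ω | t < g ω} ≤ ENNReal.ofReal κ := by
    calc ∫⁻ t in Set.Ioc 0 κ, Q {ω | t < g ω}
        ≤ ∫⁻ _ in Set.Ioc 0 κ, 1 := lintegral_mono fun t => prob_le_one
      _ = volume (Set.Ioc (0 : ℝ) κ) := setLIntegral_one _
      _ = ENNReal.ofReal κ := by rw [Real.volume_Ioc, sub_zero]
  calc (∫⁻ t in Set.Ioc 0 κ, Q {ω | t < g ω}) + ∫⁻ t in Set.Ioi κ, Q {ω | t < g ω}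
      ≤ ENNReal.ofReal κ + ENNReal.ofReal (1 - κ) := add_le_add hbound1 hbound2
    _ = 1 := by
        rw [← ENNReal.ofReal_add hκ0.le (by linarith)]
        norm_num
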